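/- If the rate function saturates, i.e., there exist R_th and γ₀ with R(γ) = R_th for all γ > γ₀, then the ratio of CDF-based scheduling throughput to the optimal throughput tends to 1 as α → 0: lim_{α→0} α S(0, α) / S(1-α, 1) = 1. -/

import Mathlib

open MeasureTheory intervalIntegral

/-- Universal throughput function `S(x, α) = ∫_{F⁻¹(x)}^∞ R(γ) d[F(γ)]^{1/α}`,
written after the substitution `u = F(γ)`. -/
noncomputable def S (F R : ℝ → ℝ) (x α : ℝ) : ℝ :=
  ∫ u in x..(1 : ℝ), R (Function.invFun F u) * ((1 / α) * u ^ (1 / α - 1))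

/-- If the rate function saturates (`R(γ) = R_th > 0` for `γ > γ₀`, with `F(γ₀) < 1`),
then the ratio of the CDF-based scheduling throughput `α S(0,α)` to the optimal
throughput `S(1-α, 1) = ∫_{F⁻¹(1-α)}^∞ R dF` tends to `1` as `α → 0⁺`. -/
theorem cdf_scheduling_achieves_upper_bound (F R : ℝ → ℝ)
    (hFmono : StrictMono F) (hFcont : Continuous F)
    (hR0 : ∀ y, 0 ≤ R y) (hRmono : Monotone R)
    (hinv : ∀ u ∈ Set.Ioo (0 : ℝ) 1, F (Function.invFun F u) = u)
    (γ₀ Rth : ℝ) (hRth : 0 < Rth) (hsat : ∀ y, γ₀ < y → R y = Rth)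
    (hFγ₀ : F γ₀ ∈ Set.Ico (0 : ℝ) 1)
    (hint : ∀ a ∈ Set.Ioc (0 : ℝ) 1,
      IntervalIntegrable
        (fun u => R (Function.invFun F u) * ((1 / a) * u ^ (1 / a - 1))) volume 0 1)
    (hint' : IntervalIntegrable (fun u => R (Function.invFun F u)) volume 0 1) :
    Filter.Tendsto
      (fun α => (α * S F R 0 α) / ∫ u in (1 - α)..(1 : ℝ), R (Function.invFun F u))
      (nhdsWithin 0 (Set.Ioi 0)) (nhds 1) := by
  set c := F γ₀ with hc
  obtain ⟨hc0, hc1⟩ := hFγ₀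
  set f : ℝ → ℝ := fun u => R (Function.invFun F u) with hf
  -- R is bounded by Rth everywhere
  have hRle : ∀ y, R y ≤ Rth := by
    intro y
    have h1 : γ₀ < max y γ₀ + 1 := by
      have := le_max_right y γ₀; linarith
    have h2 : y ≤ max y γ₀ + 1 := by
      have := le_max_left y γ₀; linarith
    calc R y ≤ R (max y γ₀ + 1) := hRmono h2
      _ = Rth := hsat _ h1
  -- on (c,1), f = Rth
  have hfRth : ∀ u ∈ Set.Ioo c 1, f u = Rth := by
    intro u hu
    have hu01 : u ∈ Set.Ioo (0:ℝ) 1 := ⟨lt_of_le_of_lt hc0 hu.1, hu.2⟩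
    have hF : F (Function.invFun F u) = u := hinv u hu01
    have : γ₀ < Function.invFun F u := by
      by_contra h
      push_neg at h
      have := hFmono.monotone h
      rw [hF] at this
      exact absurd hu.1 (not_lt.2 this)
    exact hsat _ this
  -- key pointwise bounds for the ratio
  have key : ∀ α ∈ Set.Ioo (0:ℝ) (1 - c),
      1 - c ^ (1/α) ≤ (α * S F R 0 α) / (∫ u in (1 - α)..(1 : ℝ), f u) ∧
      (α * S F R 0 α) / (∫ u in (1 - α)..(1 : ℝ), f u) ≤ 1 := by
    intro α ⟨hα0, hα1⟩
    have hαne : α ≠ 0 := ne_of_gt hα0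
    have hα1' : α ≤ 1 := by linarith
    have hrpos : (0:ℝ) < 1/α := by positivity
    set p : ℝ := 1/α - 1 with hp
    have hp1 : -1 < p := by simp [hp]; linarith
    -- denominator = Rth * α
    have hden : (∫ u in (1 - α)..(1 : ℝ), f u) = Rth * α := by
      have h1 : ∀ᵐ (u : ℝ) ∂volume, u ∈ Set.uIoc (1 - α) 1 → f u = Rth := by
        have hne : ∀ᵐ (u : ℝ) ∂volume, u ≠ 1 := by
          rw [MeasureTheory.ae_iff]
          simpa using Real.volume_singleton
        filter_upwards [hne] with u hu hu'
        rw [Set.uIoc_of_le (by linarith)] at hu'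
        exact hfRth u ⟨by linarith [hu'.1], lt_of_le_of_ne hu'.2 hu⟩
      rw [intervalIntegral.integral_congr_ae h1]
      simp [mul_comm]
    -- numerator = ∫₀¹ f u * u ^ p
    have hnum : α * S F R 0 α = ∫ u in (0:ℝ)..1, f u * u ^ p := by
      rw [S, ← intervalIntegral.integral_const_mul]
      apply intervalIntegral.integral_congr
      intro u _
      field_simp
      have hpe : (1 - α) / α = p := by rw [hp, sub_div, div_self hαne]
      rw [hpe]
    -- integrability
    have hI : IntervalIntegrable (fun u => f u * u ^ p) volume 0 1 := by
      have h0 := (hint α ⟨hα0, hα1'⟩).const_mul α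
      have : (fun u => f u * u ^ p) = fun u => α * (f u * ((1/α) * u ^ p)) := by
        funext u; field_simp
      rw [this]
      exact h0
    have hIc1 : IntervalIntegrable (fun u => f u * u ^ p) volume c 1 :=
      hI.mono_set (by rw [Set.uIcc_of_le (by linarith : c ≤ 1), Set.uIcc_of_le zero_le_one]
                      exact Set.Icc_subset_Icc hc0 le_rfl)
    have hI0c : IntervalIntegrable (fun u => f u * u ^ p) volume 0 c :=
      hI.mono_set (by rw [Set.uIcc_of_le hc0, Set.uIcc_of_le zero_le_one]
                      exact Set.Icc_subset_Icc le_rfl (le_of_lt hc1))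
    have hIrpow : IntervalIntegrable (fun u : ℝ => Rth * u ^ p) volume 0 c :=
      (intervalIntegral.intervalIntegrable_rpow' hp1).const_mul Rth
    -- split integral
    have hsplit : (∫ u in (0:ℝ)..1, f u * u ^ p)
        = (∫ u in (0:ℝ)..c, f u * u ^ p) + ∫ u in c..(1:ℝ), f u * u ^ p :=
      (intervalIntegral.integral_add_adjacent_intervals hI0c hIc1).symm
    -- tail integral
    have htail : (∫ u in c..(1:ℝ), f u * u ^ p) = Rth * (α * (1 - c ^ (1/α))) := by
      have h1 : ∀ᵐ (u : ℝ) ∂volume, u ∈ Set.uIoc c 1 → f u * u ^ p = Rth * u ^ p := by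
        have hne : ∀ᵐ (u : ℝ) ∂volume, u ≠ 1 := by
          rw [MeasureTheory.ae_iff]
          simpa using Real.volume_singleton
        filter_upwards [hne] with u hu hu'
        rw [Set.uIoc_of_le (le_of_lt hc1)] at hu'
        rw [hfRth u ⟨hu'.1, lt_of_le_of_ne hu'.2 hu⟩]
      rw [intervalIntegral.integral_congr_ae h1, intervalIntegral.integral_const_mul,
        integral_rpow (Or.inl hp1)]
      have : p + 1 = 1/α := by simp [hp]
      rw [this, Real.one_rpow]
      field_simp
    -- bounds on head integral
    have hhead0 : 0 ≤ ∫ u in (0:ℝ)..c, f u * u ^ p := by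
      apply intervalIntegral.integral_nonneg hc0
      intro u hu
      exact mul_nonneg (hR0 _) (Real.rpow_nonneg hu.1 _)
    have hhead1 : (∫ u in (0:ℝ)..c, f u * u ^ p) ≤ Rth * (α * c ^ (1/α)) := by
      have h1 : (∫ u in (0:ℝ)..c, f u * u ^ p) ≤ ∫ u in (0:ℝ)..c, Rth * u ^ p := by
        apply intervalIntegral.integral_mono_on hc0 hI0c hIrpow
        intro u hu
        exact mul_le_mul_of_nonneg_right (hRle _) (Real.rpow_nonneg hu.1 _)
      have h2 : (∫ u in (0:ℝ)..c, Rth * u ^ p) = Rth * (α * c ^ (1/α)) := by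
        rw [intervalIntegral.integral_const_mul, integral_rpow (Or.inl hp1)]
        have hp' : p + 1 = 1/α := by simp [hp]
        rw [hp', Real.zero_rpow (by positivity)]
        field_simp
        ring
      linarith
    -- wrap up
    have ht0 : 0 ≤ c ^ (1/α) := Real.rpow_nonneg hc0 _
    have ht1 : c ^ (1/α) ≤ 1 := Real.rpow_le_one hc0 (le_of_lt hc1) (le_of_lt hrpos)
    have hDpos : (0:ℝ) < Rth * α := by positivity
    rw [hden, hnum, hsplit, htail]
    constructor
    · rw [le_div_iff₀ hDpos]
      nlinarith
    · rw [div_le_one hDpos]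
      nlinarith
  -- eventually-in-filter membership
  have hmem : Set.Ioo (0:ℝ) (1 - c) ∈ nhdsWithin 0 (Set.Ioi 0) :=
    Ioo_mem_nhdsGT_of_mem ⟨le_rfl, by linarith⟩
  -- lower bound tendsto 1
  have hpow : Filter.Tendsto (fun α : ℝ => c ^ (1/α)) (nhdsWithin 0 (Set.Ioi 0)) (nhds 0) := by
    have h1 : Filter.Tendsto (fun x : ℝ => c ^ x) Filter.atTop (nhds 0) :=
      tendsto_rpow_atTop_of_base_lt_one c (by linarith) hc1
    have h2 : Filter.Tendsto (fun α : ℝ => 1/α) (nhdsWithin 0 (Set.Ioi 0)) Filter.atTop := by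
      simpa [one_div] using tendsto_inv_nhdsGT_zero (𝕜 := ℝ)
    exact h1.comp h2
  have hlo : Filter.Tendsto (fun α : ℝ => 1 - c ^ (1/α)) (nhdsWithin 0 (Set.Ioi 0)) (nhds 1) := by
    have := (tendsto_const_nhds (x := (1:ℝ)) (f := nhdsWithin 0 (Set.Ioi 0))).sub hpow
    simpa using this
  refine tendsto_of_tendsto_of_tendsto_of_le_of_le' hlo tendsto_const_nhds ?_ ?_
  · filter_upwards [hmem] with α hα
    exact (key α hα).1
  · filter_upwards [hmem] with α hα
    exact (key α hα).2
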